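/- Through every point of PHG(2, ℤ/4ℤ) there pass exactly 6 lines (in general, through any point of PHG(2,R) over a chain ring R with parameters (q,m) there are q^m + q^{m-1} lines; here q = 2, m = 2). -/

import Mathlib

/-- A point of a projective Hjelmslev geometry PHG(n-1, R): a free rank-1 submodule
of Rⁿ, i.e. the R-span of a vector having at least one unit coordinate. -/
def IsPoint {R : Type} [CommRing R] {n : ℕ} (P : Submodule R (Fin n → R)) : Prop :=
  ∃ v : Fin n → R, (∃ i, IsUnit (v i)) ∧ P = Submodule.span R {v}

/-- A free rank-k submodule of Rⁿ: a submodule linearly isomorphic to Rᵏ. -/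
def IsFreeRank {R : Type} [CommRing R] {n : ℕ} (k : ℕ) (L : Submodule R (Fin n → R)) : Prop :=
  Nonempty ((Fin k → R) ≃ₗ[R] L)

/-- A line of PHG(2, R): a free rank-2 submodule of R³. -/
abbrev IsLine {R : Type} [CommRing R] (L : Submodule R (Fin 3 → R)) : Prop := IsFreeRank 2 L

abbrev R4 := ZMod 4

namespace PHGAux

abbrev V := Fin 3 → R4

open Submodule

lemma span_pair_le {x y : V} {M : Submodule R4 V} (hx : x ∈ M) (hy : y ∈ M) :
    Submodule.span R4 {x, y} ≤ M := by
  rw [Submodule.span_le]; rintro z hz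
  rcases hz with rfl | rfl
  · exact hx
  · exact hy

lemma span_pair_unit_left {α β : R4} {x y : V} (h : α * α = 1) :
    Submodule.span R4 {α • x + β • y, y} = Submodule.span R4 {x, y} := by
  apply le_antisymm
  · apply span_pair_le
    · exact Submodule.mem_span_pair.2 ⟨α, β, rfl⟩
    · exact Submodule.mem_span_pair.2 ⟨0, 1, by simp⟩
  · apply span_pair_le
    · refine Submodule.mem_span_pair.2 ⟨α, -(α * β), ?_⟩
      rw [smul_add, smul_smul, smul_smul, h, one_smul, add_assoc, ← add_smul]
      simp
    · exact Submodule.mem_span_pair.2 ⟨0, 1, by simp⟩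

lemma span_pair_add_smul {a : R4} {x y : V} :
    Submodule.span R4 {x, y + a • x} = Submodule.span R4 {x, y} := by
  apply le_antisymm
  · apply span_pair_le
    · exact Submodule.mem_span_pair.2 ⟨1, 0, by simp⟩
    · exact Submodule.mem_span_pair.2 ⟨a, 1, by simp [add_comm]⟩
  · apply span_pair_le
    · exact Submodule.mem_span_pair.2 ⟨1, 0, by simp⟩
    · refine Submodule.mem_span_pair.2 ⟨-a, 1, ?_⟩
      rw [one_smul, add_comm, add_assoc, ← add_smul]
      simp

lemma span_pair_smul_right {u : R4} {x y : V} (h : u * u = 1) :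
    Submodule.span R4 {x, u • y} = Submodule.span R4 {x, y} := by
  apply le_antisymm
  · apply span_pair_le
    · exact Submodule.mem_span_pair.2 ⟨1, 0, by simp⟩
    · exact Submodule.mem_span_pair.2 ⟨0, u, by simp⟩
  · apply span_pair_le
    · exact Submodule.mem_span_pair.2 ⟨1, 0, by simp⟩
    · exact Submodule.mem_span_pair.2 ⟨0, u, by rw [smul_smul, h]; simp⟩

lemma isLine_of_inj (u w : V)
    (h : Function.Injective (fun x : Fin 2 → R4 => x 0 • u + x 1 • w)) :
    IsLine (Submodule.span R4 {u, w}) := by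
  let φ : (Fin 2 → R4) →ₗ[R4] V :=
    { toFun := fun x => x 0 • u + x 1 • w
      map_add' := fun x y => by simp [add_smul]; abel
      map_smul' := fun c x => by simp [smul_smul, smul_add] }
  have hrange : LinearMap.range φ = Submodule.span R4 {u, w} := by
    ext z
    rw [LinearMap.mem_range, Submodule.mem_span_pair]
    constructor
    · rintro ⟨x, hx⟩; exact ⟨x 0, x 1, hx⟩
    · rintro ⟨a, b, hab⟩; exact ⟨![a, b], by simpa [φ] using hab⟩
  exact ⟨(LinearEquiv.ofInjective φ h).trans (LinearEquiv.ofEq _ _ hrange)⟩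

lemma line_eq_span_pair {L : Submodule R4 V} (hL : IsLine L) :
    ∃ a b : V, a ∈ L ∧ b ∈ L ∧ L = Submodule.span R4 {a, b} := by
  obtain ⟨f⟩ := hL
  refine ⟨f ![1, 0], f ![0, 1], (f ![1, 0]).2, (f ![0, 1]).2, ?_⟩
  apply le_antisymm
  · intro z hz
    set x := f.symm ⟨z, hz⟩ with hx
    have hxe : (x 0) • (![1, 0] : Fin 2 → R4) + (x 1) • ![0, 1] = x := by
      funext j; fin_cases j <;> simp
    have : (x 0) • f ![1, 0] + (x 1) • f ![0, 1] = ⟨z, hz⟩ := by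
      rw [← map_smul, ← map_smul, ← map_add, hxe, hx, f.apply_symm_apply]
    refine Submodule.mem_span_pair.2 ⟨x 0, x 1, ?_⟩
    exact congrArg Subtype.val this
  · exact Submodule.span_le.2 (by rintro z (rfl | rfl) <;> simp [(f _).2])

lemma not_line_degenerate {b c : R4} (hb : 2 * b = 0) (hc : 2 * c = 0) :
    ¬ IsLine (Submodule.span R4 {(![1,0,0] : V), ![0,b,c]}) := by
  rintro ⟨f⟩
  set L := Submodule.span R4 {(![1,0,0] : V), ![0,b,c]} with hLdef
  have hcard16 : Nat.card L = 16 := by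
    rw [← Nat.card_congr f.toEquiv]
    simp [Nat.card_eq_fintype_card]
  have key : ∀ n b c : R4, 2*b = 0 → 2*c = 0 → (n*b = 0 ∧ n*c = 0) ∨ (n*b = b ∧ n*c = c) := by
    decide
  let σ : R4 × Fin 2 → L := fun p =>
    ⟨p.1 • ![1,0,0] + (if p.2 = 0 then 0 else ![0,b,c]), by
      split_ifs
      · exact Submodule.mem_span_pair.2 ⟨p.1, 0, by simp⟩
      · exact Submodule.mem_span_pair.2 ⟨p.1, 1, by simp⟩⟩
  have hσ : Function.Surjective σ := by
    rintro ⟨z, hz⟩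
    obtain ⟨m, n, hmn⟩ := Submodule.mem_span_pair.1 hz
    rcases key n b c hb hc with ⟨h1, h2⟩ | ⟨h1, h2⟩
    · refine ⟨(m, 0), ?_⟩
      have : n • (![0,b,c] : V) = 0 := by
        funext j; fin_cases j <;> simp [h1, h2]
      simp only [σ, Subtype.mk.injEq, if_pos]
      rw [← hmn, this]
    · refine ⟨(m, 1), ?_⟩
      have : n • (![0,b,c] : V) = ![0,b,c] := by
        funext j; fin_cases j <;> simp [h1, h2]
      simp only [σ, Subtype.mk.injEq]
      rw [if_neg (by decide), ← hmn, this]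
  have := Nat.card_le_card_of_surjective σ hσ
  rw [hcard16] at this
  simp [Nat.card_eq_fintype_card] at this

def Lbc (b c : R4) : Submodule R4 V := Submodule.span R4 {![1,0,0], ![0,b,c]}

lemma key_enum : {L : Submodule R4 V | IsLine L ∧ Submodule.span R4 {(![1,0,0] : V)} ≤ L}
    = {Lbc 1 0, Lbc 1 1, Lbc 1 2, Lbc 1 3, Lbc 0 1, Lbc 2 1} := by
  have sq_or_two : ∀ a : R4, a * a = 1 ∨ 2 * a = 0 := by decide
  ext L
  simp only [Set.mem_setOf_eq, Set.mem_insert_iff, Set.mem_singleton_iff]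
  constructor
  · rintro ⟨hline, hle⟩
    have he0 : (![1,0,0] : V) ∈ L := hle (Submodule.mem_span_singleton_self _)
    obtain ⟨a, b, ha, hb, rfl⟩ := line_eq_span_pair hline
    obtain ⟨α, β, hαβ⟩ := Submodule.mem_span_pair.1 he0
    -- Step 1 : L = span {e0, d} for some d
    have step1 : ∃ d : V, Submodule.span R4 {a, b} = Submodule.span R4 {(![1,0,0] : V), d} := by
      rcases sq_or_two α with hα | hα
      · refine ⟨b, ?_⟩
        rw [← span_pair_unit_left (x := a) (y := b) hα, hαβ]
      · rcases sq_or_two β with hβ | hβ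
        · refine ⟨a, ?_⟩
          rw [Set.pair_comm a b, ← span_pair_unit_left (x := b) (y := a) hβ,
            add_comm, hαβ]
        · exfalso
          have h2 : (2 : R4) • (![1,0,0] : V) = 0 := by
            rw [← hαβ, smul_add, smul_smul, smul_smul, hα, hβ, zero_smul, zero_smul, add_zero]
          have := congrFun h2 0
          simp at this
          exact absurd this (by decide)
    obtain ⟨d, hd⟩ := step1
    -- Step 2 : normalize d to ![0, B, C]
    have hdvec : d = ![0, d 1, d 2] + (d 0) • ![1,0,0] := by
      funext j; fin_cases j <;> simp
    have step2 : Submodule.span R4 {(![1,0,0] : V), d}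
        = Submodule.span R4 {(![1,0,0] : V), ![0, d 1, d 2]} := by
      have h := span_pair_add_smul (a := d 0) (x := (![1,0,0] : V)) (y := ![0, d 1, d 2])
      rw [← hdvec] at h
      exact h
    rw [hd, step2] at hline ⊢
    -- Step 3 : (d 1, d 2) unimodular
    set B := d 1; set C := d 2
    have hBC : B * B = 1 ∨ C * C = 1 := by
      rcases sq_or_two B with h | h
      · exact Or.inl h
      · rcases sq_or_two C with h' | h'
        · exact Or.inr h'
        · exact absurd hline (not_line_degenerate h h')
    -- Step 4 : canonical representative
    have rep : ∀ B C : R4, (B*B = 1 ∨ C*C = 1) → ∃ u : R4, u*u = 1 ∧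
        ((u*B=1∧u*C=0) ∨ (u*B=1∧u*C=1) ∨ (u*B=1∧u*C=2) ∨ (u*B=1∧u*C=3) ∨
         (u*B=0∧u*C=1) ∨ (u*B=2∧u*C=1)) := by decide
    obtain ⟨u, hu, hcase⟩ := rep B C hBC
    have hsmul : Submodule.span R4 {(![1,0,0] : V), ![0, B, C]}
        = Submodule.span R4 {(![1,0,0] : V), ![0, u*B, u*C]} := by
      rw [← span_pair_smul_right (u := u) (x := (![1,0,0] : V)) (y := ![0, B, C]) hu]
      congr 2
      funext j; fin_cases j <;> simp
    rw [hsmul] at hline ⊢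
    rcases hcase with ⟨h1, h2⟩ | ⟨h1, h2⟩ | ⟨h1, h2⟩ | ⟨h1, h2⟩ | ⟨h1, h2⟩ | ⟨h1, h2⟩ <;>
      rw [h1, h2] <;> simp [Lbc]
  · have hmem : ∀ b c : R4, Submodule.span R4 {(![1,0,0] : V)} ≤ Lbc b c := by
      intro b c
      rw [Submodule.span_singleton_le_iff_mem]
      exact Submodule.subset_span (Set.mem_insert _ _)
    rintro (rfl | rfl | rfl | rfl | rfl | rfl) <;>
      exact ⟨isLine_of_inj _ _ (by decide), hmem _ _⟩

/-- transvection-like equiv sending `Pi.single i 1` to `v`, provided `v i = 1`. -/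
def gmap (v : V) (i : Fin 3) (hv : v i = 1) : V ≃ₗ[R4] V :=
  LinearEquiv.ofLinear
    (LinearMap.id + (LinearMap.proj i).smulRight (v - Pi.single i 1))
    (LinearMap.id - (LinearMap.proj i).smulRight (v - Pi.single i 1))
    (by
      ext x j
      simp [Pi.sub_apply, hv, mul_comm, sub_mul, mul_sub])
    (by
      ext x j
      simp [Pi.sub_apply, hv, mul_comm, sub_mul, mul_sub])

lemma gmap_single (v : V) (i : Fin 3) (hv : v i = 1) : gmap v i hv (Pi.single i 1) = v := by
  funext j
  simp [gmap, LinearEquiv.ofLinear_apply, Pi.sub_apply]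

def swapE (i : Fin 3) : V ≃ₗ[R4] V := LinearEquiv.funCongrLeft R4 R4 (Equiv.swap 0 i)

lemma swapE_e0 (i : Fin 3) : swapE i ![1,0,0] = Pi.single i 1 := by
  fin_cases i <;> decide

lemma isLine_map (e : V ≃ₗ[R4] V) {L : Submodule R4 V} (h : IsLine L) :
    IsLine (Submodule.map (e : V →ₗ[R4] V) L) :=
  h.elim fun f => ⟨f.trans (e.submoduleMap L)⟩

lemma map_symm_map (e : V ≃ₗ[R4] V) (M : Submodule R4 V) :
    Submodule.map (e.symm : V →ₗ[R4] V) (Submodule.map (e : V →ₗ[R4] V) M) = M := by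
  ext x; simp [Submodule.mem_map]

lemma ncard_transport (e : V ≃ₗ[R4] V) (P : Submodule R4 V) :
    {L : Submodule R4 V | IsLine L ∧ Submodule.map (e : V →ₗ[R4] V) P ≤ L}.ncard
      = {L : Submodule R4 V | IsLine L ∧ P ≤ L}.ncard := by
  have himg : {L : Submodule R4 V | IsLine L ∧ Submodule.map (e : V →ₗ[R4] V) P ≤ L}
      = (Submodule.map (e : V →ₗ[R4] V)) '' {L : Submodule R4 V | IsLine L ∧ P ≤ L} := by
    ext L
    simp only [Set.mem_image, Set.mem_setOf_eq]
    constructor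
    · rintro ⟨h1, h2⟩
      refine ⟨Submodule.map (e.symm : V →ₗ[R4] V) L, ⟨isLine_map e.symm h1, ?_⟩,
        by simpa using map_symm_map e.symm L⟩
      have := Submodule.map_mono (f := (e.symm : V →ₗ[R4] V)) h2
      rwa [map_symm_map] at this
    · rintro ⟨L', ⟨h1, h2⟩, rfl⟩
      exact ⟨isLine_map e h1, Submodule.map_mono h2⟩
  rw [himg]
  apply Set.ncard_image_of_injective
  intro M N h
  rw [← map_symm_map e M, h, map_symm_map]

lemma Lbc_ne {b c b' c' : R4}
    (h : ¬ ∃ m n : R4, m • (![1,0,0] : V) + n • ![0,b',c'] = ![0,b,c]) :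
    Lbc b c ≠ Lbc b' c' := by
  intro heq
  apply h
  have hm : (![0,b,c] : V) ∈ Lbc b c := Submodule.subset_span (Set.mem_insert_of_mem _ rfl)
  rw [heq] at hm
  exact Submodule.mem_span_pair.1 hm

lemma six_ncard :
    ({Lbc 1 0, Lbc 1 1, Lbc 1 2, Lbc 1 3, Lbc 0 1, Lbc 2 1} : Set (Submodule R4 V)).ncard = 6 := by
  rw [Set.ncard_insert_of_notMem, Set.ncard_insert_of_notMem, Set.ncard_insert_of_notMem,
    Set.ncard_insert_of_notMem, Set.ncard_insert_of_notMem, Set.ncard_singleton]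
  · simp only [Set.mem_insert_iff, Set.mem_singleton_iff, not_or]
    exact Lbc_ne (by decide)
  · simp only [Set.mem_insert_iff, Set.mem_singleton_iff, not_or]
    exact ⟨Lbc_ne (by decide), Lbc_ne (by decide)⟩
  · simp only [Set.mem_insert_iff, Set.mem_singleton_iff, not_or]
    exact ⟨Lbc_ne (by decide), Lbc_ne (by decide), Lbc_ne (by decide)⟩
  · simp only [Set.mem_insert_iff, Set.mem_singleton_iff, not_or]
    exact ⟨Lbc_ne (by decide), Lbc_ne (by decide), Lbc_ne (by decide), Lbc_ne (by decide)⟩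
  · simp only [Set.mem_insert_iff, Set.mem_singleton_iff, not_or]
    exact ⟨Lbc_ne (by decide), Lbc_ne (by decide), Lbc_ne (by decide), Lbc_ne (by decide),
      Lbc_ne (by decide)⟩

end PHGAux

open PHGAux Submodule in
/-- Through every point of PHG(2, ℤ/4ℤ) there pass exactly 6 = 2² + 2 lines. -/
theorem lines_through_point :
    ∀ P : Submodule R4 (Fin 3 → R4), IsPoint P →
      {L : Submodule R4 (Fin 3 → R4) | IsLine L ∧ P ≤ L}.ncard = 6 := by
  rintro P ⟨v, ⟨i, hui⟩, rfl⟩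
  obtain ⟨r, hr⟩ := hui.exists_left_inv
  have hrunit : IsUnit r := IsUnit.of_mul_eq_one (v i) hr
  set v' : V := r • v with hv'def
  have hv' : v' i = 1 := by simp [hv'def, hr]
  have hspan : Submodule.span R4 {v} = Submodule.span R4 {v'} :=
    (Submodule.span_singleton_smul_eq hrunit v).symm
  set e : V ≃ₗ[R4] V := (swapE i).trans (gmap v' i hv') with hedef
  have he0 : e ![1,0,0] = v' := by
    simp [hedef, LinearEquiv.trans_apply, swapE_e0, gmap_single]
  have hmap : Submodule.map (e : V →ₗ[R4] V) (Submodule.span R4 {(![1,0,0] : V)})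
      = Submodule.span R4 {v'} := by
    rw [Submodule.map_span, Set.image_singleton]
    simp [he0]
  rw [hspan, ← hmap, ncard_transport, key_enum, six_ncard]
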